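/- Let R be a commutative ℚ-algebra, A an associative unital R-algebra, C a maximal commutative R-subalgebra of A, and M an A-bimodule symmetric over R. Then for all p₀, p₁ ∈ ℕ: if m ∈ F^C_{p₀} M and a ∈ F^C_{p₁} A, then the commutator m·a − a·m belongs to F^C_{p₀+p₁−1} M (where F^C_{−1} M = 0 when p₀ = p₁ = 0). In particular (taking M = A), [F^C_{p₀}A, F^C_{p₁}A] ⊆ F^C_{p₀+p₁−1}A, so the associated graded algebra of the filtration F^C on A is commutative. -/

import Mathlib

/- STATEMENT 7: Over a commutative `ℚ`-algebra `R`, with `C` a maximal commutative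
subalgebra of `A` and `M` an `A`-bimodule symmetric over `R`: for `m ∈ F^C_{p₀}M` and
`a ∈ F^C_{p₁}A` the commutator `m·a − a·m` lies in `F^C_{p₀+p₁−1}M` (with
`F^C_{−1}M = 0`).  In particular `[F^C_{p₀}A, F^C_{p₁}A] ⊆ F^C_{p₀+p₁−1}A`, so the
associated graded algebra is commutative.  Here the filtration is indexed by `ℤ`:
`F^C_n = {m | ∀ c ∈ C, ad_c^{(n+1)⁺}(m) = 0}`, so that `F^C_{−1} = 0`. -/

variable {R A M : Type*} [CommRing R] [Algebra ℚ R] [Ring A] [Algebra R A]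
  [AddCommGroup M] [Module A M] [Module Aᵐᵒᵖ M] [SMulCommClass A Aᵐᵒᵖ M]
  [Module R M] [IsScalarTower R A M] [IsScalarTower R Aᵐᵒᵖ M]

/-- `ad_a(m) = a·m − m·a` on the bimodule `M`. -/
def adM (a : A) (m : M) : M := a • m - MulOpposite.op a • m

/-- `ad_c(a) = ca − ac` on the algebra `A`. -/
def adA (c a : A) : A := c * a - a * c

/-- The commutator `[m, a] = m·a − a·m` of `m ∈ M` and `a ∈ A`. -/
def brkt (m : M) (a : A) : M := MulOpposite.op a • m - a • m

/-- The `ℤ`-indexed filtration `F^C_n M`; for `n = −1` it is `{0}`. -/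
def FMz (C : Subalgebra R A) (n : ℤ) : Set M :=
  {m | ∀ c ∈ C, (adM c)^[(n + 1).toNat] m = 0}

/-- The `ℤ`-indexed filtration `F^C_n A`; for `n = −1` it is `{0}`. -/
def FAz (C : Subalgebra R A) (n : ℤ) : Set A :=
  {a | ∀ c ∈ C, (adA c)^[(n + 1).toNat] a = 0}

section Aux

open MulOpposite Finset

set_option linter.unusedSectionVars false

include R in
private lemma tf' (n : ℕ) (hn : n ≠ 0) (x : M) (h : n • x = 0) : x = 0 := by
  have h1 : ((n : R)) • x = 0 := by rwa [Nat.cast_smul_eq_nsmul]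
  have : x = (algebraMap ℚ R ((n:ℚ)⁻¹)) • (((n:R)) • x) := by
    rw [smul_smul, ← map_natCast (algebraMap ℚ R) n, ← map_mul,
      inv_mul_cancel₀ (by exact_mod_cast hn), map_one, one_smul]
  rw [this, h1, smul_zero]

include R in
private lemma poly_vanish' : ∀ (N : ℕ) (v : ℕ → M),
    (∀ k : ℕ, ∑ i ∈ range (N+1), k^i • v i = 0) → ∀ i ≤ N, v i = 0 := by
  intro N
  induction N with
  | zero =>
    intro v hv i hi
    interval_cases i
    simpa using hv 0
  | succ N ih =>
    intro v hv
    set w : ℕ → M := fun t => ∑ i ∈ range (N+2), if t < i then (i.choose t) • v i else 0 with hw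
    have hdiff : ∀ k : ℕ, ∑ t ∈ range (N+1), k^t • w t = 0 := by
      intro k
      have e1 : ∀ i, ((k+1)^i : ℕ) • v i
          = (∑ t ∈ range i, (k^t * i.choose t) • v i) + k^i • v i := by
        intro i
        rw [add_pow k 1 i]
        simp only [one_pow, mul_one, Nat.cast_id]
        rw [Finset.sum_range_succ, Nat.choose_self, mul_one, add_smul, Finset.sum_smul]
      have e2 : ∑ i ∈ range (N+2), (∑ t ∈ range i, (k^t * i.choose t) • v i) = 0 := by
        have : ∑ i ∈ range (N+2), ((k+1):ℕ)^i • v i = 0 := hv (k+1)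
        have hk : ∑ i ∈ range (N+2), (k:ℕ)^i • v i = 0 := hv k
        calc ∑ i ∈ range (N+2), (∑ t ∈ range i, (k^t * i.choose t) • v i)
            = ∑ i ∈ range (N+2), (((k+1)^i : ℕ) • v i - k^i • v i) := by
              refine Finset.sum_congr rfl fun i _ => ?_
              rw [e1 i]; abel
          _ = (∑ i ∈ range (N+2), ((k+1)^i : ℕ) • v i) - ∑ i ∈ range (N+2), k^i • v i := by
              rw [Finset.sum_sub_distrib]
          _ = 0 := by rw [this, hk, sub_zero]
      have e3 : ∑ i ∈ range (N+2), (∑ t ∈ range i, (k^t * i.choose t) • v i)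
          = ∑ t ∈ range (N+2), k^t • w t := by
        have inner : ∀ i ∈ range (N+2), (∑ t ∈ range i, (k^t * i.choose t) • v i)
            = ∑ t ∈ range (N+2), (if t < i then (k^t * i.choose t) • v i else 0) := by
          intro i hi
          rw [Finset.mem_range] at hi
          rw [← Finset.sum_filter]
          apply Finset.sum_congr _ (fun _ _ => rfl)
          ext t
          simp only [Finset.mem_range, Finset.mem_filter]
          omega
        rw [Finset.sum_congr rfl inner, Finset.sum_comm]
        refine Finset.sum_congr rfl fun t _ => ?_
        rw [hw, Finset.smul_sum]
        refine Finset.sum_congr rfl fun i _ => ?_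
        split
        · rw [mul_smul]
        · rw [smul_zero]
      have e4 : ∑ t ∈ range (N+2), k^t • w t
          = ∑ t ∈ range (N+1), k^t • w t + k^(N+1) • w (N+1) :=
        Finset.sum_range_succ _ _
      have e5 : w (N+1) = 0 := by
        simp only [hw]
        refine Finset.sum_eq_zero fun i hi => ?_
        rw [Finset.mem_range] at hi
        rw [if_neg (by omega)]
      rw [← e3, e2, e5, smul_zero, add_zero] at e4
      exact e4.symm
    have hwz := ih w hdiff
    have hvN : v (N+1) = 0 := by
      have h1 : w N = (N+1) • v (N+1) := by
        simp only [hw]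
        rw [Finset.sum_eq_single (N+1)]
        · rw [if_pos (by omega), Nat.choose_succ_self_right]
        · intro i hi hne
          rw [Finset.mem_range] at hi
          rw [if_neg (by omega)]
        · intro h; exact absurd (Finset.mem_range.mpr (by omega)) h
      have := hwz N (le_refl N)
      rw [h1] at this
      exact tf' (R := R) (N+1) (by omega) _ this
    have hv' : ∀ k : ℕ, ∑ i ∈ range (N+1), k^i • v i = 0 := by
      intro k
      have := hv k
      rw [Finset.sum_range_succ, hvN, smul_zero, add_zero] at this
      exact this
    intro i hi
    rcases Nat.lt_or_ge i (N+1) with h | h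
    · exact ih v hv' i (by omega)
    · have : i = N+1 := by omega
      rw [this]; exact hvN

/-- `ad_c` as an additive endomorphism of `M`. -/
noncomputable def adE (c : A) : AddMonoid.End M :=
  (DistribMulAction.toAddMonoidEnd A M c) - (DistribMulAction.toAddMonoidEnd Aᵐᵒᵖ M (op c))

private lemma adE_apply (c : A) (m : M) : adE c m = c • m - op c • m := rfl

private lemma adE_pow_apply (c : A) (n : ℕ) (m : M) :
    ((adE c)^n) m = (adM (M := M) c)^[n] m := by
  induction n generalizing m with
  | zero => rfl
  | succ k ih =>
    rw [pow_succ, Function.iterate_succ_apply]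
    show (adE c ^ k) (adE c m) = _
    rw [ih]; rfl

private lemma adE_add (c c' : A) : adE (M := M) (c + c') = adE c + adE c' := by
  refine AddMonoidHom.ext fun m => ?_
  show adE (c + c') m = adE c m + adE c' m
  rw [adE_apply, adE_apply, adE_apply, op_add, add_smul, add_smul]
  abel

private lemma adE_nsmul (k : ℕ) (c : A) : adE (M := M) (k • c) = k • adE c := by
  refine AddMonoidHom.ext fun m => ?_
  show adE (k • c) m = k • (adE c m)
  rw [adE_apply, adE_apply, op_smul, smul_sub]
  rw [nsmul_eq_mul, mul_smul, Nat.cast_smul_eq_nsmul]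
  rw [nsmul_eq_mul, mul_smul, Nat.cast_smul_eq_nsmul]

private lemma adE_comm {c c' : A} (h : c * c' = c' * c) :
    Commute (adE (M := M) c) (adE c') := by
  show _ = _
  refine AddMonoidHom.ext fun m => ?_
  show adE c (adE c' m) = adE c' (adE c m)
  simp only [adE_apply, smul_sub]
  rw [smul_smul, smul_smul, smul_smul, smul_smul, ← op_mul, ← op_mul, h,
    smul_comm c' (op c) m, smul_comm c (op c') m]
  abel

private lemma step_down (C : Subalgebra R A) (hC : ∀ x ∈ C, ∀ y ∈ C, x * y = y * x)
    {N : ℕ} {m : M} (hm : ∀ d ∈ C, ((adE d)^(N+1)) m = 0)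
    {c : A} (hc : c ∈ C) {d : A} (hd : d ∈ C) :
    ((adE d)^N) (adE c m) = 0 := by
  set x : AddMonoid.End M := adE d with hx
  set y : AddMonoid.End M := adE c with hy
  have hxy : Commute x y := adE_comm (hC d hd c hc)
  have hexp : ∀ k : ℕ, ∑ i ∈ range (N+1+1),
      k^i • (((N+1).choose i) • ((y^i) ((x^(N+1-i)) m))) = 0 := by
    intro k
    have hmem : d + k • c ∈ C := add_mem hd (nsmul_mem hc k)
    have h0 : ((adE (d + k • c))^(N+1)) m = 0 := hm _ hmem
    rw [adE_add, adE_nsmul] at h0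
    have hky : Commute (k • y) x := by
      rw [nsmul_eq_mul]
      exact Commute.mul_left (Nat.cast_commute k x) hxy.symm
    have h1 : ((k • y + x)^(N+1)) m = 0 := by
      rw [← hx, ← hy, add_comm] at h0; exact h0
    rw [hky.add_pow] at h1
    erw [AddMonoidHom.finset_sum_apply] at h1
    rw [← h1]
    refine Finset.sum_congr rfl fun i _ => ?_
    rw [smul_pow]
    calc k^i • (((N+1).choose i) • ((y^i) ((x^(N+1-i)) m)))
        = k^i • ((y^i) ((x^(N+1-i)) ((((N+1).choose i : ℕ) : AddMonoid.End M) m))) := by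
          rw [AddMonoid.End.natCast_apply, map_nsmul, map_nsmul]
      _ = (k^i • y^i) ((x^(N+1-i)) ((((N+1).choose i : ℕ) : AddMonoid.End M) m)) := by
          exact (AddMonoidHom.nsmul_apply _ _ _).symm
      _ = ((k^i • y^i) * x^(N+1-i) * (((N+1).choose i : ℕ) : AddMonoid.End M)) m := rfl
  have hv1 := poly_vanish' (R := R) (N+1)
    (fun i => ((N+1).choose i) • ((y^i) ((x^(N+1-i)) m))) hexp 1 (by omega)
  simp only [Nat.choose_one_right, pow_one, Nat.add_sub_cancel] at hv1
  have h2 : y ((x^N) m) = 0 := tf' (R := R) (N+1) (by omega) _ hv1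
  have h3 : (x^N) (y m) = y ((x^N) m) := by
    have hc' := (hxy.pow_left N).symm
    calc (x^N) (y m) = ((x^N) * y) m := rfl
      _ = (y * (x^N)) m := by rw [hc']
      _ = y ((x^N) m) := rfl
  rw [h3, h2]

private lemma leibniz (c a : A) (m : M) :
    adE c (brkt m a) = brkt (adE c m) a + brkt m (adA c a) := by
  simp only [adE_apply, brkt, adA, smul_sub, sub_smul, op_sub, op_mul, mul_smul]
  rw [smul_comm a (op c) m, smul_comm c (op a) m]
  abel

private lemma brkt_zero (a : A) : brkt (0 : M) a = 0 := by
  simp [brkt]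

private lemma adA_eq_adM (c : A) : adA c = adM (M := A) c := rfl

/-- The core induction. -/
private lemma core (C : Subalgebra R A)
    (hC : ∀ x ∈ C, ∀ y ∈ C, x * y = y * x)
    (hmax : ∀ a : A, (∀ c ∈ C, c * a = a * c) → a ∈ C) :
    ∀ (n p₀ p₁ : ℕ), p₀ + p₁ = n →
    ∀ m : M, (∀ c ∈ C, ((adE c)^(p₀+1)) m = 0) →
    ∀ a : A, (∀ c ∈ C, ((adE (M := A) c)^(p₁+1)) a = 0) →
    ∀ c ∈ C, ((adE c)^(p₀+p₁)) (brkt m a) = 0 := by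
  intro n
  induction n with
  | zero =>
    intro p₀ p₁ hn m hm a ha c hc
    obtain ⟨h0, h1⟩ : p₀ = 0 ∧ p₁ = 0 := by omega
    subst h0; subst h1
    have haC : a ∈ C := by
      refine hmax a fun c' hc' => ?_
      have := ha c' hc'
      rw [pow_one] at this
      have h2 : c' • a - op c' • a = 0 := this
      have h3 : c' * a - a * c' = 0 := h2
      exact sub_eq_zero.mp h3
    show brkt m a = 0
    have := hm a haC
    rw [pow_one] at this
    rw [adE_apply] at this
    have h4 : a • m = op a • m := by
      have := sub_eq_zero.mp this
      exact this
    rw [brkt, ← h4, sub_self]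
  | succ n ih =>
    intro p₀ p₁ hn m hm a ha c hc
    rw [show p₀ + p₁ = n + 1 from hn, pow_succ]
    show (adE c ^ n) (adE c (brkt m a)) = 0
    rw [leibniz, map_add]
    have term1 : (adE c ^ n) (brkt (adE c m) a) = 0 := by
      rcases p₀ with _ | q
      · have : adE c m = 0 := by
          have := hm c hc; rwa [pow_one] at this
        rw [this, brkt_zero, map_zero]
      · have hm' : ∀ d ∈ C, ((adE d)^(q+1)) (adE c m) = 0 :=
          fun d hd => step_down C hC hm hc hd
        have := ih q p₁ (by omega) (adE c m) hm' a ha c hc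
        rwa [show q + p₁ = n by omega] at this
    have term2 : (adE c ^ n) (brkt m (adA c a)) = 0 := by
      rcases p₁ with _ | q
      · have : adA c a = 0 := by
          have := ha c hc; rw [pow_one] at this
          exact this
        rw [this]
        have : brkt m (0 : A) = 0 := by simp [brkt]
        rw [this, map_zero]
      · have ha' : ∀ d ∈ C, ((adE (M := A) d)^(q+1)) (adE (M := A) c a) = 0 :=
          fun d hd => step_down (M := A) C hC ha hc hd
        have ha'' : ∀ d ∈ C, ((adE (M := A) d)^(q+1)) (adA c a) = 0 := ha'
        have := ih p₀ q (by omega) m hm (adA c a) ha'' c hc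
        rwa [show p₀ + q = n by omega] at this
    rw [term1, term2, add_zero]

private lemma mem_FMz_iff {C : Subalgebra R A} {p : ℕ} {m : M} :
    m ∈ FMz C (p : ℤ) ↔ ∀ c ∈ C, ((adE c)^(p+1)) m = 0 := by
  simp only [FMz, Set.mem_setOf_eq, show ((p:ℤ) + 1).toNat = p + 1 by omega, adE_pow_apply]

private lemma mem_FAz_iff {C : Subalgebra R A} {p : ℕ} {a : A} :
    a ∈ FAz C (p : ℤ) ↔ ∀ c ∈ C, ((adE (M := A) c)^(p+1)) a = 0 := by
  simp only [FAz, Set.mem_setOf_eq, show ((p:ℤ) + 1).toNat = p + 1 by omega,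
    adE_pow_apply, adA_eq_adM]

end Aux

theorem commutator_lowers_filtration (C : Subalgebra R A)
    (hC : ∀ x ∈ C, ∀ y ∈ C, x * y = y * x)
    (hmax : ∀ a : A, (∀ c ∈ C, c * a = a * c) → a ∈ C)
    (p₀ p₁ : ℕ) :
    (∀ m ∈ FMz (M := M) C (p₀ : ℤ), ∀ a ∈ FAz C (p₁ : ℤ),
        brkt m a ∈ FMz (M := M) C ((p₀ : ℤ) + (p₁ : ℤ) - 1)) ∧
    (∀ x ∈ FAz C (p₀ : ℤ), ∀ y ∈ FAz C (p₁ : ℤ),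
        x * y - y * x ∈ FAz C ((p₀ : ℤ) + (p₁ : ℤ) - 1)) := by
  have key : ∀ m ∈ FMz (M := M) C (p₀ : ℤ), ∀ a ∈ FAz C (p₁ : ℤ),
      brkt m a ∈ FMz (M := M) C ((p₀ : ℤ) + (p₁ : ℤ) - 1) := by
    intro m hm a ha
    rw [mem_FMz_iff] at hm
    rw [mem_FAz_iff] at ha
    have h := core C hC hmax (p₀ + p₁) p₀ p₁ rfl m hm a ha
    intro c hc
    have h2 := h c hc
    rw [adE_pow_apply] at h2
    rw [show ((p₀:ℤ) + (p₁:ℤ) - 1 + 1).toNat = p₀ + p₁ by omega]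
    exact h2
  refine ⟨key, ?_⟩
  have keyA : ∀ m ∈ FMz (M := A) C (p₀ : ℤ), ∀ a ∈ FAz C (p₁ : ℤ),
      brkt m a ∈ FMz (M := A) C ((p₀ : ℤ) + (p₁ : ℤ) - 1) := by
    intro m hm a ha
    rw [mem_FMz_iff] at hm
    rw [mem_FAz_iff] at ha
    have h := core (M := A) C hC hmax (p₀ + p₁) p₀ p₁ rfl m hm a ha
    intro c hc
    have h2 := h c hc
    rw [adE_pow_apply] at h2
    rw [show ((p₀:ℤ) + (p₁:ℤ) - 1 + 1).toNat = p₀ + p₁ by omega]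
    exact h2
  intro x hx y hy
  have hxA : x ∈ FMz (M := A) C (p₀ : ℤ) := by
    rw [mem_FMz_iff]
    rw [mem_FAz_iff] at hx
    exact hx
  have h := keyA x hxA y hy
  have hb : brkt (M := A) x y = x * y - y * x := rfl
  rw [hb] at h
  intro c hc
  have h2 := h c hc
  rw [show ((p₀:ℤ) + (p₁:ℤ) - 1 + 1).toNat = p₀ + p₁ from by omega] at h2 ⊢
  have : (adA c)^[p₀ + p₁] (x * y - y * x) = (adM (M := A) c)^[p₀ + p₁] (x * y - y * x) := by
    rw [adA_eq_adM]
  rw [this]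
  exact h2
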